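/- Let π be a subset seed of span m over a finite alphabet A with distinguished letter 1. Then the automaton S_π accepts exactly the words in which π occurs: for every word s ∈ A*, ψ*((∅,0), s) is a final state if and only if there exists p with 0 ≤ p ≤ |s| − m such that s_{p+i} ∈ π_i for all i ∈ [1..m]. -/

import Mathlib

/-- The set `R_π` of non-`#` positions of a subset seed `π` of span `m` over an alphabet
with distinguished "match" letter `one`: positions `i ∈ [1..m]` with `π i ≠ {one}`. -/
def Rpi {A : Type*} [DecidableEq A] (m : ℕ) (one : A) (π : ℕ → Finset A) : Finset ℕ :=
  (Finset.Icc 1 m).filter (fun i => π i ≠ {one})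

/-- Transition function `ψ` of the subset seed automaton `S_π`.  States are pairs
`(X, t)` with `X : Finset ℕ` and `t : ℕ`; note that `max (X ∪ {0}) = X.sup id`.
A state is final when `max (X ∪ {0}) + t ≥ m`; final states are fixed.  On a
non-final state `(X, t)`: reading `one` yields `(X, t+1)`; reading `a ≠ one`
yields `(X_U ∪ X_V, 0)` with `X_U = {x ∈ R_π : x ≤ t+1 ∧ a ∈ π x}` and
`X_V = {x+t+1 : x ∈ X, x+t+1 ≤ m, a ∈ π (x+t+1)}`. -/
def seedStep {A : Type*} [DecidableEq A] (m : ℕ) (one : A) (π : ℕ → Finset A)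
    (q : Finset ℕ × ℕ) (a : A) : Finset ℕ × ℕ :=
  if m ≤ q.1.sup id + q.2 then q
  else if a = one then (q.1, q.2 + 1)
  else ((Rpi m one π).filter (fun x => x ≤ q.2 + 1 ∧ a ∈ π x) ∪
        ((q.1.filter (fun x => x + q.2 + 1 ≤ m ∧ a ∈ π (x + q.2 + 1))).image
          (fun x => x + q.2 + 1)), 0)

/-- The extension `ψ*` of the transition function of `S_π` to words,
reading letters left to right from state `q`. -/
def seedRun {A : Type*} [DecidableEq A] (m : ℕ) (one : A) (π : ℕ → Finset A)
    (q : Finset ℕ × ℕ) : List A → Finset ℕ × ℕ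
  | [] => q
  | a :: s => seedRun m one π (seedStep m one π q a) s


section SeedAux

variable {A : Type*} [DecidableEq A] (m : ℕ) (one : A) (π : ℕ → Finset A)

/-- `π_1 … π_x` matches the factor of `w` occupying (0-based) positions `e-x … e-1`. -/
def MatAt (w : List A) (e x : ℕ) : Prop :=
  x ≤ e ∧ ∀ i, i < x → ∀ h : e - x + i < w.length, w[e - x + i] ∈ π (i + 1)

/-- `π` occurs somewhere in `w`. -/
def Gocc (w : List A) : Prop := ∃ e, m ≤ e ∧ e ≤ w.length ∧ MatAt π w e m

/-- Invariant of reachable non-final states. -/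
def SeedInv (w : List A) (X : Finset ℕ) (t : ℕ) : Prop :=
  t ≤ w.length ∧
  (∀ i, w.length - t ≤ i → ∀ h : i < w.length, w[i] = one) ∧
  (t = w.length ∨ ∀ h : w.length - t - 1 < w.length, w[w.length - t - 1] ≠ one) ∧
  ∀ x, x ∈ X ↔ x ∈ Rpi m one π ∧ MatAt π w (w.length - t) x

variable {m one π}

private lemma gec {α : Type*} {l : List α} {i j : ℕ} (h : i = j) {hi : i < l.length} :
    l[i]'hi = l[j]'(h ▸ hi) := by subst h; rfl

lemma matAt_zero {w : List A} {e : ℕ} : MatAt π w e 0 :=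
  ⟨Nat.zero_le _, fun i hi => by omega⟩

lemma matAt_append_left {w v : List A} {e x : ℕ} (he : e ≤ w.length) :
    MatAt π (w ++ v) e x ↔ MatAt π w e x := by
  constructor <;> rintro ⟨hxe, h⟩ <;> refine ⟨hxe, fun i hi hb => ?_⟩
  · have hbw : e - x + i < (w ++ v).length := by simp; omega
    have := h i hi hbw
    rwa [List.getElem_append_left hb] at this
  · have hbw : e - x + i < w.length := by omega
    have := h i hi hbw
    rwa [List.getElem_append_left hbw]

lemma matAt_extend (hπ : ∀ i ∈ Finset.Icc 1 m, one ∈ π i)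
    {w : List A} {a : A} {u x : ℕ}
    (hun : u ≤ w.length)
    (hones : ∀ i, w.length - u ≤ i → ∀ h : i < w.length, w[i] = one)
    (hmat : MatAt π w (w.length - u) x)
    (hm : x + u + 1 ≤ m) (ha : a ∈ π (x + u + 1)) :
    MatAt π (w ++ [a]) (w.length + 1) (x + u + 1) := by
  obtain ⟨hxe, hmat⟩ := hmat
  refine ⟨by omega, fun i hi hb => ?_⟩
  have hb' : w.length + 1 - (x + u + 1) + i < (w ++ [a]).length := by simp; omega
  rcases lt_trichotomy i x with h1 | h1 | h1
  · have hidx : w.length + 1 - (x + u + 1) + i = w.length - u - x + i := by omega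
    have hbw : w.length - u - x + i < w.length := by omega
    have := hmat i h1 hbw
    simp only [hidx]
    rwa [List.getElem_append_left hbw]
  · -- i = x, part of the run of ones (if u > 0) or the last letter (if u = 0)
    rcases Nat.eq_zero_or_pos u with hu | hu
    · subst hu
      have hidx : w.length + 1 - (x + 0 + 1) + i = w.length := by omega
      rw [gec hidx, List.getElem_concat_length (l := w) (a := a) rfl]
      have : i + 1 = x + 0 + 1 := by omega
      rwa [this]
    · have hidx : w.length + 1 - (x + u + 1) + i = w.length - u := by omega
      have hbw : w.length - u < w.length := by omega
      rw [gec hidx, List.getElem_append_left hbw,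
        hones _ (le_refl _) hbw]
      exact hπ _ (Finset.mem_Icc.mpr ⟨by omega, by omega⟩)
  · rcases Nat.lt_or_ge i (x + u) with h2 | h2
    · have hidx : w.length + 1 - (x + u + 1) + i = w.length - u + (i - x) := by omega
      have hbw : w.length - u + (i - x) < w.length := by omega
      rw [gec hidx, List.getElem_append_left hbw,
        hones _ (by omega) hbw]
      exact hπ _ (Finset.mem_Icc.mpr ⟨by omega, by omega⟩)
    · have hi' : i = x + u := by omega
      have hidx : w.length + 1 - (x + u + 1) + i = w.length := by omega
      rw [gec hidx, List.getElem_concat_length (l := w) (a := a) rfl]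
      have : i + 1 = x + u + 1 := by omega
      rwa [this]

lemma matAt_last {w : List A} {a : A} {y : ℕ} (hy : 1 ≤ y) (hyn : y ≤ w.length + 1)
    (hmat : MatAt π (w ++ [a]) (w.length + 1) y) : a ∈ π y := by
  obtain ⟨-, hmat⟩ := hmat
  have hb : w.length + 1 - y + (y - 1) < (w ++ [a]).length := by simp; omega
  have := hmat (y - 1) (by omega) hb
  have hidx : w.length + 1 - y + (y - 1) = w.length := by omega
  rw [gec hidx, List.getElem_concat_length (l := w) (a := a) rfl] at this
  have : a ∈ π (y - 1 + 1) := this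
  rwa [Nat.sub_add_cancel hy] at this

lemma matAt_restrict {w : List A} {a : A} {t y : ℕ}
    (htn : t ≤ w.length)
    (hmax : t = w.length ∨ ∀ h : w.length - t - 1 < w.length, w[w.length - t - 1] ≠ one)
    (hty : t + 1 < y) (hym : y ≤ m)
    (hmat : MatAt π (w ++ [a]) (w.length + 1) y) :
    (y - t - 1) ∈ Rpi m one π ∧ MatAt π w (w.length - t) (y - t - 1) := by
  obtain ⟨hye, hmat⟩ := hmat
  have hyn : y ≤ w.length + 1 := hye
  have htlt : t < w.length := by omega
  -- the letter of `w` just before the run of ones is matched by `π (y - t - 1)`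
  have hbw : w.length - t - 1 < w.length := by omega
  have hb : w.length + 1 - y + (y - t - 2) < (w ++ [a]).length := by simp; omega
  have hkey := hmat (y - t - 2) (by omega) hb
  have hidx : w.length + 1 - y + (y - t - 2) = w.length - t - 1 := by omega
  rw [gec hidx, List.getElem_append_left hbw] at hkey
  have hidx2 : y - t - 2 + 1 = y - t - 1 := by omega
  rw [hidx2] at hkey
  have hne : w[w.length - t - 1] ≠ one := by
    rcases hmax with h | h
    · omega
    · exact h hbw
  constructor
  · refine Finset.mem_filter.mpr ⟨Finset.mem_Icc.mpr ⟨by omega, by omega⟩, fun hc => ?_⟩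
    rw [hc, Finset.mem_singleton] at hkey
    exact hne hkey
  · refine ⟨by omega, fun i hi hbi => ?_⟩
    have hb2 : w.length + 1 - y + i < (w ++ [a]).length := by simp; omega
    have := hmat i (by omega) hb2
    have hidx3 : w.length + 1 - y + i = w.length - t - (y - t - 1) + i := by omega
    rw [gec hidx3, List.getElem_append_left hbi] at this
    exact this

lemma gocc_mono {w v : List A} (h : Gocc m π w) : Gocc m π (w ++ v) := by
  obtain ⟨e, hm, he, hmat⟩ := h
  exact ⟨e, hm, by simp; omega, (matAt_append_left he).mpr hmat⟩

lemma gocc_append {w : List A} {a : A} :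
    Gocc m π (w ++ [a]) ↔ Gocc m π w ∨ MatAt π (w ++ [a]) (w.length + 1) m := by
  constructor
  · rintro ⟨e, hm, he, hmat⟩
    simp only [List.length_append, List.length_singleton] at he
    rcases Nat.lt_or_ge e (w.length + 1) with h | h
    · exact Or.inl ⟨e, hm, by omega, (matAt_append_left (by omega)).mp hmat⟩
    · have : e = w.length + 1 := by omega
      subst this
      exact Or.inr hmat
  · rintro (⟨e, hm, he, hmat⟩ | hmat)
    · exact ⟨e, hm, by simp; omega, (matAt_append_left he).mpr hmat⟩
    · exact ⟨w.length + 1, hmat.1, by simp, hmat⟩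

lemma seedStep_spec (hπ : ∀ i ∈ Finset.Icc 1 m, one ∈ π i)
    {w : List A} {X : Finset ℕ} {t : ℕ} (a : A)
    (hnf : ¬ m ≤ X.sup id + t) (hinv : SeedInv m one π w X t) :
    (m ≤ (seedStep m one π (X, t) a).1.sup id + (seedStep m one π (X, t) a).2 →
      MatAt π (w ++ [a]) (w.length + 1) m) ∧
    (¬ m ≤ (seedStep m one π (X, t) a).1.sup id + (seedStep m one π (X, t) a).2 →
      SeedInv m one π (w ++ [a]) (seedStep m one π (X, t) a).1 (seedStep m one π (X, t) a).2 ∧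
      ¬ MatAt π (w ++ [a]) (w.length + 1) m) := by
  obtain ⟨htn, hones, hmax, hX⟩ := hinv
  have hm1 : 1 ≤ m := by omega
  have hRpi : ∀ x, x ∈ Rpi m one π → 1 ≤ x ∧ x ≤ m ∧ π x ≠ {one} := by
    intro x hx
    obtain ⟨hx1, hx2⟩ := Finset.mem_filter.mp hx
    obtain ⟨h1, h2⟩ := Finset.mem_Icc.mp hx1
    exact ⟨h1, h2, hx2⟩
  have hmat0 : MatAt π w (w.length - t) (X.sup id) := by
    rcases X.eq_empty_or_nonempty with h | h
    · rw [h]; simpa using matAt_zero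
    · obtain ⟨x0, hx0, hsup⟩ := Finset.exists_mem_eq_sup X h id
      rw [hsup]
      exact ((hX x0).mp hx0).2
  have hsuple : X.sup id ≤ w.length - t := hmat0.1
  simp only [seedStep, if_neg hnf]
  by_cases ha1 : a = one
  · -- reading the letter `one`
    rw [if_pos ha1]
    constructor
    · intro hfin
      simp only at hfin
      have hmeq : m = X.sup id + t + 1 := by omega
      have := matAt_extend hπ (u := t) (a := a) htn hones hmat0 (by omega)
        (by rw [← hmeq, ha1]; exact hπ m (Finset.mem_Icc.mpr ⟨hm1, le_refl m⟩))
      rwa [← hmeq] at this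
    · intro hnf'
      simp only at hnf' ⊢
      have hn1 : (w ++ [a]).length = w.length + 1 := by simp
      have hgetw : ∀ i (h : i < w.length) (h' : i < (w ++ [a]).length),
          (w ++ [a])[i] = w[i] := fun i h h' => List.getElem_append_left h
      refine ⟨⟨by omega, ?_, ?_, ?_⟩, ?_⟩
      · intro i hi h
        rw [hn1] at hi
        have h' : i < w.length + 1 := by rw [hn1] at h; exact h
        rcases Nat.lt_or_ge i w.length with h2 | h2
        · rw [hgetw i h2 h]
          exact hones i (by omega) h2
        · have : i = w.length := by omega
          rw [List.getElem_concat_length (l := w) (a := a) this]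
          exact ha1
      · rcases Nat.eq_or_lt_of_le htn with h | hlt
        · left; rw [hn1]; omega
        · right
          intro hb
          have hbw : w.length - t - 1 < w.length := by omega
          have hidx : (w ++ [a]).length - (t + 1) - 1 = w.length - t - 1 := by
            rw [hn1]; omega
          rw [gec hidx, hgetw _ hbw _]
          exact (hmax.resolve_left (by omega)) hbw
      · intro x
        rw [hX x]
        have he : (w ++ [a]).length - (t + 1) = w.length - t := by rw [hn1]; omega
        rw [he, matAt_append_left (by omega)]
      · intro hc
        rcases Nat.lt_or_ge (t + 1) m with h2 | h2
        · obtain ⟨hR, hmat'⟩ := matAt_restrict htn hmax h2 (le_refl m) hc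
          have : m - t - 1 ∈ X := (hX _).mpr ⟨hR, hmat'⟩
          have := Finset.le_sup (f := id) this
          simp only [id] at this
          omega
        · omega
  · -- reading a letter `a ≠ one`
    rw [if_neg ha1]
    set XU := (Rpi m one π).filter (fun x => x ≤ t + 1 ∧ a ∈ π x) with hXU
    set XV := (X.filter (fun x => x + t + 1 ≤ m ∧ a ∈ π (x + t + 1))).image
      (fun x => x + t + 1) with hXV
    have hne1 : ∀ y, a ∈ π y → π y ≠ {one} := by
      intro y hy hc
      rw [hc, Finset.mem_singleton] at hy
      exact ha1 hy
    have hchar : ∀ y, y ∈ XU ∪ XV ↔ y ∈ Rpi m one π ∧ MatAt π (w ++ [a]) (w.length + 1) y := by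
      intro y
      rw [Finset.mem_union]
      constructor
      · rintro (hy | hy)
        · obtain ⟨hyR, hyt, hay⟩ := Finset.mem_filter.mp hy
          obtain ⟨hy1, hym, -⟩ := hRpi y hyR
          refine ⟨hyR, ?_⟩
          have hu : y - 1 ≤ t := by omega
          have := matAt_extend hπ (u := y - 1) (x := 0) (a := a) (by omega)
            (fun i hi h => hones i (by omega) h)
            matAt_zero (by omega) (by rwa [show 0 + (y - 1) + 1 = y by omega])
          rwa [show 0 + (y - 1) + 1 = y by omega] at this
        · obtain ⟨x, hx, hxy⟩ := Finset.mem_image.mp hy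
          obtain ⟨hxX, hxm, hax⟩ := Finset.mem_filter.mp hx
          obtain ⟨hxR, hmatx⟩ := (hX x).mp hxX
          refine ⟨?_, ?_⟩
          · refine Finset.mem_filter.mpr ⟨Finset.mem_Icc.mpr ⟨by omega, by omega⟩, ?_⟩
            rw [← hxy] at *
            exact hne1 _ hax
          · rw [← hxy]
            exact matAt_extend hπ htn hones hmatx hxm hax
      · rintro ⟨hyR, hmaty⟩
        obtain ⟨hy1, hym, -⟩ := hRpi y hyR
        have hyn : y ≤ w.length + 1 := hmaty.1
        have hay : a ∈ π y := matAt_last hy1 hyn hmaty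
        rcases Nat.lt_or_ge (t + 1) y with h2 | h2
        · right
          obtain ⟨hR', hmat'⟩ := matAt_restrict htn hmax h2 hym hmaty
          refine Finset.mem_image.mpr ⟨y - t - 1, Finset.mem_filter.mpr
            ⟨(hX _).mpr ⟨hR', hmat'⟩, by omega, ?_⟩, by omega⟩
          rwa [show y - t - 1 + t + 1 = y by omega]
        · exact Or.inl (Finset.mem_filter.mpr ⟨hyR, h2, hay⟩)
    constructor
    · intro hfin
      simp only at hfin
      rcases (XU ∪ XV).eq_empty_or_nonempty with h | h
      · rw [h] at hfin; simp at hfin; omega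
      · obtain ⟨y0, hy0, hsup⟩ := Finset.exists_mem_eq_sup _ h id
        simp only [id] at hsup
        obtain ⟨hy0R, hmaty0⟩ := (hchar y0).mp hy0
        obtain ⟨-, hy0m, -⟩ := hRpi y0 hy0R
        have : y0 = m := by omega
        rwa [← this]
    · intro hnf'
      simp only at hnf' ⊢
      have hn1 : (w ++ [a]).length = w.length + 1 := by simp
      refine ⟨⟨by omega, ?_, ?_, ?_⟩, ?_⟩
      · intro i hi h
        rw [hn1] at hi h
        omega
      · right
        intro hb
        have hidx : (w ++ [a]).length - 0 - 1 = w.length := by rw [hn1]; omega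
        rw [gec hidx, List.getElem_concat_length (l := w) (a := a) rfl]
        exact ha1
      · intro x
        simp only [hn1, Nat.sub_zero]
        exact hchar x
      · intro hc
        have hmR : m ∈ Rpi m one π := by
          refine Finset.mem_filter.mpr ⟨Finset.mem_Icc.mpr ⟨hm1, le_refl m⟩, ?_⟩
          exact hne1 m (matAt_last hm1 hc.1 hc)
        have : m ∈ XU ∪ XV := (hchar m).mpr ⟨hmR, hc⟩
        have := Finset.le_sup (f := id) this
        simp only [id] at this
        omega

lemma seedRun_spec (hπ : ∀ i ∈ Finset.Icc 1 m, one ∈ π i) :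
    ∀ (s w : List A) (q : Finset ℕ × ℕ),
    (m ≤ q.1.sup id + q.2 → Gocc m π w) →
    (¬ m ≤ q.1.sup id + q.2 → SeedInv m one π w q.1 q.2 ∧ ¬ Gocc m π w) →
    (m ≤ (seedRun m one π q s).1.sup id + (seedRun m one π q s).2 ↔ Gocc m π (w ++ s)) := by
  intro s
  induction s with
  | nil =>
    intro w q h1 h2
    simp only [seedRun, List.append_nil]
    constructor
    · exact h1
    · intro hG
      by_contra hnf
      exact (h2 hnf).2 hG
  | cons a s ih =>
    intro w q h1 h2
    obtain ⟨X, t⟩ := q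
    simp only [seedRun]
    have hwa : w ++ a :: s = (w ++ [a]) ++ s := by simp
    rw [hwa]
    by_cases hf : m ≤ X.sup id + t
    · have hstep : seedStep m one π (X, t) a = (X, t) := by
        simp only [seedStep, if_pos hf]
      rw [hstep]
      exact ih (w ++ [a]) (X, t) (fun _ => gocc_mono (h1 hf)) (fun h => absurd hf h)
    · obtain ⟨hinv, hG⟩ := h2 hf
      obtain ⟨hfin, hnfin⟩ := seedStep_spec hπ a hf hinv
      refine ih (w ++ [a]) _ ?_ ?_
      · intro h
        have hmat := hfin h
        exact ⟨w.length + 1, hmat.1, by simp, hmat⟩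
      · intro h
        obtain ⟨hinv', hnm⟩ := hnfin h
        refine ⟨hinv', fun hc => ?_⟩
        rcases gocc_append.mp hc with h' | h'
        · exact hG h'
        · exact hnm h'

lemma gocc_iff_exists (s : List A) :
    Gocc m π s ↔ ∃ p : ℕ, List.Forall₂ (fun (b : Finset A) (a : A) => a ∈ b)
      ((List.range m).map (fun i => π (i + 1))) ((s.drop p).take m) := by
  constructor
  · rintro ⟨e, hm, he, hxe, hmat⟩
    refine ⟨e - m, List.forall₂_iff_get.mpr ⟨by simp; omega, fun i h1 h2 => ?_⟩⟩
    simp only [List.length_map, List.length_range] at h1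
    simp only [List.get_eq_getElem, List.getElem_map, List.getElem_range,
      List.getElem_take, List.getElem_drop]
    have hb : e - m + i < s.length := by omega
    have := hmat i h1 hb
    exact this
  · rintro ⟨p, hf⟩
    obtain ⟨hlen, hget⟩ := List.forall₂_iff_get.mp hf
    simp only [List.length_map, List.length_range, List.length_take, List.length_drop] at hlen
    have h3 : m ≤ s.length - p := by rw [hlen]; exact Nat.min_le_right _ _
    rcases Nat.eq_zero_or_pos m with hm0 | hm0
    · exact ⟨0, by omega, by omega, by omega, fun i hi => by omega⟩
    have hpm : p + m ≤ s.length := by omega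
    refine ⟨p + m, by omega, hpm, by omega, fun i hi hb => ?_⟩
    have h1 : i < ((List.range m).map (fun i => π (i + 1))).length := by simp; omega
    have h2 : i < ((s.drop p).take m).length := by simp; omega
    have := hget i h1 h2
    simp only [List.get_eq_getElem, List.getElem_map, List.getElem_range,
      List.getElem_take, List.getElem_drop] at this
    rw [gec (show p + m - m + i = p + i by omega)]
    exact this

end SeedAux

/-- The automaton `S_π` accepts exactly the words in which `π` occurs:
`ψ*((∅,0), s)` is a final state iff there is a position `p` such that the factor of `s` of
length `m` starting after position `p` matches `π` letterwise (the `Forall₂` condition forces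
in particular `p + m ≤ |s|`). -/
theorem seedAutomaton_final_iff_occurrence
    {A : Type*} [DecidableEq A] (m : ℕ) (one : A) (π : ℕ → Finset A)
    (hπ : ∀ i ∈ Finset.Icc 1 m, one ∈ π i)
    (s : List A) :
    m ≤ (seedRun m one π (∅, 0) s).1.sup id + (seedRun m one π (∅, 0) s).2 ↔
      ∃ p : ℕ, List.Forall₂ (fun (b : Finset A) (a : A) => a ∈ b)
        ((List.range m).map (fun i => π (i + 1))) ((s.drop p).take m) := by
  have h1 : m ≤ (∅ : Finset ℕ).sup id + 0 → Gocc m π [] := by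
    intro h
    simp at h
    exact ⟨0, by omega, le_refl _, by omega, fun i hi => by omega⟩
  have h2 : ¬ m ≤ (∅ : Finset ℕ).sup id + 0 →
      SeedInv m one π [] ∅ 0 ∧ ¬ Gocc m π [] := by
    intro h
    simp at h
    refine ⟨⟨le_refl _, fun i hi h' => by simp at h', Or.inl rfl, fun x => ?_⟩, ?_⟩
    · simp only [Finset.notMem_empty, false_iff]
      rintro ⟨hR, hx, -⟩
      obtain ⟨h1, -⟩ := Finset.mem_Icc.mp (Finset.mem_filter.mp hR).1
      simp at hx
      omega
    · rintro ⟨e, hme, he, -⟩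
      simp at he
      omega
  have := seedRun_spec hπ s [] (∅, 0) h1 h2
  simp only [List.nil_append] at this
  rw [this]
  exact gocc_iff_exists s
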